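/- Equality patterns preserve value equality: if δ₁ ⇌_Δ δ₂ are value environments with the same equality pattern under Δ, and v₁, v₂ are values (terms possibly containing variables of Δ) of a common type τ, then the denotations of v₁ and v₂ under δ₁ are equal if and only if their denotations under δ₂ are equal. -/

import Mathlib

/-- Polymorphic types: Unit, Sum, Prod, and type variables. -/
inductive PTy : Type
  | unit : PTy
  | sum : PTy → PTy → PTy
  | prod : PTy → PTy → PTy
  | var : ℕ → PTy
deriving DecidableEq

/-- Apply a type-variable substitution. -/
def psubst (σ : ℕ → PTy) : PTy → PTy
  | .unit => .unit
  | .sum a b => .sum (psubst σ a) (psubst σ b)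
  | .prod a b => .prod (psubst σ a) (psubst σ b)
  | .var n => σ n

/-- Concrete values. -/
inductive Val : Type
  | sole : Val
  | vleft : Val → Val
  | vright : Val → Val
  | vpair : Val → Val → Val
deriving DecidableEq

/-- Typing of concrete values. -/
inductive HasTy : Val → PTy → Prop
  | sole : HasTy .sole .unit
  | vleft {v a b} : HasTy v a → HasTy (.vleft v) (.sum a b)
  | vright {v a b} : HasTy v b → HasTy (.vright v) (.sum a b)
  | vpair {v w a b} : HasTy v a → HasTy w b → HasTy (.vpair v w) (.prod a b)

/-- A type is monomorphic (contains no type variables). -/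
def Mono : PTy → Prop
  | .unit => True
  | .sum a b => Mono a ∧ Mono b
  | .prod a b => Mono a ∧ Mono b
  | .var _ => False

/-- Shells: values with holes at type-variable positions. -/
inductive Shell : Type
  | sole : Shell
  | sleft : Shell → Shell
  | sright : Shell → Shell
  | spair : Shell → Shell → Shell
  | hole : ℕ → Shell
deriving DecidableEq

/-- The shell of a value at a (possibly polymorphic) type. -/
def shell : PTy → Val → Shell
  | .var n, _ => .hole n
  | .sum a _, .vleft v => .sleft (shell a v)
  | .sum _ b, .vright v => .sright (shell b v)
  | .prod a b, .vpair v w => .spair (shell a v) (shell b w)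
  | _, _ => .sole

/-- The ordered list of α-holes of a value at a type. -/
def holes (α : ℕ) : PTy → Val → List Val
  | .var n, v => if n = α then [v] else []
  | .sum a _, .vleft v => holes α a v
  | .sum _ b, .vright v => holes α b v
  | .prod a b, .vpair v w => holes α a v ++ holes α b w
  | _, _ => []

/-- Environment shells: per-variable shells. -/
def envshell (Δ : List PTy) (δ : List Val) : List Shell :=
  List.zipWith shell Δ δ

/-- Environment holes: concatenated α-holes across all variables. -/
def envholes (α : ℕ) (Δ : List PTy) (δ : List Val) : List Val :=
  (List.zipWith (holes α) Δ δ).flatten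

/-- The equality-pattern relation on value environments. -/
def EqPat (Δ : List PTy) (δ₁ δ₂ : List Val) : Prop :=
  envshell Δ δ₁ = envshell Δ δ₂ ∧
  ∀ (α : ℕ) (i j : ℕ) (h₁ k₁ h₂ k₂ : Val),
    (envholes α Δ δ₁)[i]? = some h₁ → (envholes α Δ δ₁)[j]? = some k₁ →
    (envholes α Δ δ₂)[i]? = some h₂ → (envholes α Δ δ₂)[j]? = some k₂ →
    (h₁ = k₁ ↔ h₂ = k₂)

/-- Well-typedness of a value environment: δ : σ(Δ). -/
def EnvTy (σ : ℕ → PTy) (Δ : List PTy) (δ : List Val) : Prop :=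
  List.Forall₂ (fun τ v => HasTy v (psubst σ τ)) Δ δ

/-- Value terms, possibly containing variables (de Bruijn style indices into Δ). -/
inductive Term : Type
  | sole : Term
  | tleft : Term → Term
  | tright : Term → Term
  | tpair : Term → Term → Term
  | var : ℕ → Term
deriving DecidableEq

/-- Denotation of a term under a value environment. -/
def denT : Term → List Val → Val
  | .sole, _ => .sole
  | .tleft t, δ => .vleft (denT t δ)
  | .tright t, δ => .vright (denT t δ)
  | .tpair s t, δ => .vpair (denT s δ) (denT t δ)
  | .var n, δ => δ.getD n .sole

/-- Typing of terms under a type environment. -/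
inductive TmTy : List PTy → Term → PTy → Prop
  | sole {Δ} : TmTy Δ .sole .unit
  | tleft {Δ t a b} : TmTy Δ t a → TmTy Δ (.tleft t) (.sum a b)
  | tright {Δ t a b} : TmTy Δ t b → TmTy Δ (.tright t) (.sum a b)
  | tpair {Δ s t a b} : TmTy Δ s a → TmTy Δ t b → TmTy Δ (.tpair s t) (.prod a b)
  | var {Δ n τ} : Δ[n]? = some τ → TmTy Δ (.var n) τ

/-- Maximum number of occurrences of type variable α in a type. -/
def cnt (α : ℕ) : PTy → ℕ
  | .unit => 0
  | .sum a b => max (cnt α a) (cnt α b)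
  | .prod a b => cnt α a + cnt α b
  | .var n => if n = α then 1 else 0

/-- Maximum number of occurrences of α in a type environment. -/
def cntEnv (α : ℕ) (Δ : List PTy) : ℕ := (Δ.map (cnt α)).sum

/-- Enumeration of the concrete values of a (monomorphic) type. -/
def enum : PTy → List Val
  | .unit => [.sole]
  | .sum a b => (enum a).map .vleft ++ (enum b).map .vright
  | .prod a b => (enum a).flatMap (fun v => (enum b).map (.vpair v))
  | .var _ => []

lemma hasTy_unit_inv {u : Val} (h : HasTy u .unit) : u = .sole := by cases h; rfl

lemma hasTy_sum_inv {u : Val} {a b : PTy} (h : HasTy u (.sum a b)) :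
    (∃ v, u = .vleft v ∧ HasTy v a) ∨ (∃ v, u = .vright v ∧ HasTy v b) := by
  cases h
  · exact .inl ⟨_, rfl, ‹_›⟩
  · exact .inr ⟨_, rfl, ‹_›⟩

lemma hasTy_prod_inv {u : Val} {a b : PTy} (h : HasTy u (.prod a b)) :
    ∃ v w, u = .vpair v w ∧ HasTy v a ∧ HasTy w b := by
  cases h; exact ⟨_, _, rfl, ‹_›, ‹_›⟩

lemma denT_ty {σ : ℕ → PTy} {Δ : List PTy} {δ : List Val} (ht : EnvTy σ Δ δ)
    {v : Term} {τ : PTy} (hv : TmTy Δ v τ) : HasTy (denT v δ) (psubst σ τ) := by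
  induction hv with
  | sole => exact .sole
  | tleft _ ih => exact .vleft ih
  | tright _ ih => exact .vright ih
  | tpair _ _ ih1 ih2 => exact .vpair ih1 ih2
  | @var n τ' h =>
    unfold EnvTy at ht
    rw [List.forall₂_iff_get] at ht
    obtain ⟨hl, hg⟩ := ht
    obtain ⟨hn, he⟩ := List.getElem?_eq_some_iff.mp h
    have hn' : n < δ.length := by omega
    have := hg n hn hn'
    simp only [List.get_eq_getElem] at this
    rw [he] at this
    simp only [denT]
    rw [List.getD_eq_getElem δ _ hn']
    exact this

lemma holes_len {σ₁ σ₂ : ℕ → PTy} (τ : PTy) :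
    ∀ {u₁ u₂ : Val}, HasTy u₁ (psubst σ₁ τ) → HasTy u₂ (psubst σ₂ τ) →
    shell τ u₁ = shell τ u₂ → ∀ α, (holes α τ u₁).length = (holes α τ u₂).length := by
  induction τ with
  | unit =>
    intro u₁ u₂ h₁ h₂ hs α
    rw [hasTy_unit_inv h₁, hasTy_unit_inv h₂]
  | var n => intro u₁ u₂ h₁ h₂ hs α; by_cases h : n = α <;> simp [holes, h]
  | sum a b iha ihb =>
    intro u₁ u₂ h₁ h₂ hs α
    rcases hasTy_sum_inv h₁ with ⟨v₁, rfl, hv₁⟩ | ⟨v₁, rfl, hv₁⟩ <;>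
      rcases hasTy_sum_inv h₂ with ⟨v₂, rfl, hv₂⟩ | ⟨v₂, rfl, hv₂⟩ <;>
      simp [shell, holes] at hs ⊢
    · exact iha hv₁ hv₂ hs α
    · exact ihb hv₁ hv₂ hs α
  | prod a b iha ihb =>
    intro u₁ u₂ h₁ h₂ hs α
    obtain ⟨v₁, w₁, rfl, hva, hwa⟩ := hasTy_prod_inv h₁
    obtain ⟨v₂, w₂, rfl, hvb, hwb⟩ := hasTy_prod_inv h₂
    simp [shell] at hs
    simp [holes, iha hva hvb hs.1 α, ihb hwa hwb hs.2 α]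

lemma eq_iff_shell_holes {σ : ℕ → PTy} (τ : PTy) :
    ∀ {u₁ u₂ : Val}, HasTy u₁ (psubst σ τ) → HasTy u₂ (psubst σ τ) →
    (u₁ = u₂ ↔ shell τ u₁ = shell τ u₂ ∧ ∀ α, holes α τ u₁ = holes α τ u₂) := by
  induction τ with
  | unit =>
    intro u₁ u₂ h₁ h₂
    rw [hasTy_unit_inv h₁, hasTy_unit_inv h₂]; simp
  | var n =>
    intro u₁ u₂ h₁ h₂
    constructor
    · rintro rfl; exact ⟨rfl, fun _ => rfl⟩
    · rintro ⟨-, hh⟩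
      have := hh n
      simp [holes] at this
      exact this
  | sum a b iha ihb =>
    intro u₁ u₂ h₁ h₂
    rcases hasTy_sum_inv h₁ with ⟨v₁, rfl, hv₁⟩ | ⟨v₁, rfl, hv₁⟩ <;>
      rcases hasTy_sum_inv h₂ with ⟨v₂, rfl, hv₂⟩ | ⟨v₂, rfl, hv₂⟩ <;>
      simp [shell, holes]
    · exact iha hv₁ hv₂
    · exact ihb hv₁ hv₂
  | prod a b iha ihb =>
    intro u₁ u₂ h₁ h₂
    obtain ⟨v₁, w₁, rfl, hva, hwa⟩ := hasTy_prod_inv h₁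
    obtain ⟨v₂, w₂, rfl, hvb, hwb⟩ := hasTy_prod_inv h₂
    simp only [shell, holes, Val.vpair.injEq, Shell.spair.injEq]
    constructor
    · rintro ⟨rfl, rfl⟩; exact ⟨⟨rfl, rfl⟩, fun _ => rfl⟩
    · rintro ⟨⟨hs1, hs2⟩, hh⟩
      have hl := holes_len (σ₁ := σ) (σ₂ := σ) a hva hvb hs1
      have hsplit := fun α => List.append_inj (hh α) (hl α)
      exact ⟨(iha hva hvb).mpr ⟨hs1, fun α => (hsplit α).1⟩,
             (ihb hwa hwb).mpr ⟨hs2, fun α => (hsplit α).2⟩⟩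

lemma envshell_pt {Δ : List PTy} {δ₁ δ₂ : List Val}
    (hl₁ : Δ.length = δ₁.length) (hl₂ : Δ.length = δ₂.length)
    (hs : envshell Δ δ₁ = envshell Δ δ₂) {n : ℕ} (hn : n < Δ.length) :
    shell Δ[n] (δ₁.getD n .sole) = shell Δ[n] (δ₂.getD n .sole) := by
  have e := congrArg (fun l => l[n]?) hs
  have h1 : n < δ₁.length := by omega
  have h2 : n < δ₂.length := by omega
  simp only [envshell, List.getElem?_zipWith, List.getElem?_eq_getElem hn,
    List.getElem?_eq_getElem h1, List.getElem?_eq_getElem h2] at e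
  simp only [Option.some.injEq] at e
  rwa [List.getD_eq_getElem δ₁ _ h1, List.getD_eq_getElem δ₂ _ h2]

lemma shell_denT {Δ : List PTy} {δ₁ δ₂ : List Val}
    (hl₁ : Δ.length = δ₁.length) (hl₂ : Δ.length = δ₂.length)
    (hs : envshell Δ δ₁ = envshell Δ δ₂) {v : Term} {τ : PTy} (hv : TmTy Δ v τ) :
    shell τ (denT v δ₁) = shell τ (denT v δ₂) := by
  induction hv with
  | sole => rfl
  | tleft _ ih => simp [denT, shell, ih]
  | tright _ ih => simp [denT, shell, ih]
  | tpair _ _ ih1 ih2 => simp [denT, shell, ih1, ih2]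
  | @var n τ' h =>
    obtain ⟨hn, he⟩ := List.getElem?_eq_some_iff.mp h
    have := envshell_pt hl₁ hl₂ hs hn
    rwa [he] at this

lemma flatten_chunk : ∀ (L : List (List Val)) (n : ℕ) (c : List Val), L[n]? = some c →
    ∀ k, k < c.length →
      (L.flatten)[((L.take n).map List.length).sum + k]? = (c)[k]? := by
  intro L
  induction L with
  | nil => intro n c h; simp at h
  | cons hd tl ih =>
    intro n c h k hk
    cases n with
    | zero =>
      simp only [List.getElem?_cons_zero, Option.some.injEq] at h
      subst h
      simp [List.getElem?_append, hk]
    | succ m =>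
      simp only [List.getElem?_cons_succ] at h
      have key := ih m c h k hk
      have : ((hd :: tl).take (m + 1)).map List.length =
          hd.length :: ((tl.take m).map List.length) := rfl
      rw [this]
      simp only [List.sum_cons, List.flatten_cons, List.getElem?_append]
      rw [if_neg (by omega)]
      rw [show hd.length + ((tl.take m).map List.length).sum + k - hd.length =
        ((tl.take m).map List.length).sum + k from by omega]
      exact key

lemma envTy_pt {σ : ℕ → PTy} {Δ : List PTy} {δ : List Val} (ht : EnvTy σ Δ δ)
    {n : ℕ} (hn : n < Δ.length) :
    ∃ h : n < δ.length, HasTy δ[n] (psubst σ Δ[n]) := by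
  unfold EnvTy at ht
  rw [List.forall₂_iff_get] at ht
  obtain ⟨hl, hg⟩ := ht
  have hn' : n < δ.length := by omega
  exact ⟨hn', by simpa using hg n hn hn'⟩

lemma chunk_len {σ₁ σ₂ : ℕ → PTy} {Δ : List PTy} {δ₁ δ₂ : List Val}
    (ht₁ : EnvTy σ₁ Δ δ₁) (ht₂ : EnvTy σ₂ Δ δ₂)
    (hs : envshell Δ δ₁ = envshell Δ δ₂) (α : ℕ) :
    (List.zipWith (holes α) Δ δ₁).map List.length =
    (List.zipWith (holes α) Δ δ₂).map List.length := by
  have hl₁ := List.Forall₂.length_eq ht₁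
  have hl₂ := List.Forall₂.length_eq ht₂
  apply List.ext_getElem
  · simp [List.length_zipWith]; omega
  · intro n n₁ n₂
    have hn : n < Δ.length := by
      simp [List.length_zipWith] at n₁; omega
    obtain ⟨h1, hty1⟩ := envTy_pt ht₁ hn
    obtain ⟨h2, hty2⟩ := envTy_pt ht₂ hn
    have hsh := envshell_pt hl₁ hl₂ hs hn
    rw [List.getD_eq_getElem δ₁ _ h1, List.getD_eq_getElem δ₂ _ h2] at hsh
    simp only [List.getElem_map, List.getElem_zipWith]
    exact holes_len Δ[n] hty1 hty2 hsh α

lemma holes_idx {σ₁ σ₂ : ℕ → PTy} {Δ : List PTy} {δ₁ δ₂ : List Val}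
    (ht₁ : EnvTy σ₁ Δ δ₁) (ht₂ : EnvTy σ₂ Δ δ₂)
    (hs : envshell Δ δ₁ = envshell Δ δ₂) {v : Term} {τ : PTy} (hv : TmTy Δ v τ) (α : ℕ) :
    ∃ idx : List ℕ,
      (∀ i ∈ idx, i < (envholes α Δ δ₁).length ∧ i < (envholes α Δ δ₂).length) ∧
      holes α τ (denT v δ₁) = idx.map (fun i => (envholes α Δ δ₁).getD i .sole) ∧
      holes α τ (denT v δ₂) = idx.map (fun i => (envholes α Δ δ₂).getD i .sole) := by
  induction hv with
  | sole => exact ⟨[], by simp, by simp [denT, holes], by simp [denT, holes]⟩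
  | @tleft _ a b _ ih =>
    obtain ⟨idx, hb, e1, e2⟩ := ih
    exact ⟨idx, hb, by simpa [denT, holes] using e1, by simpa [denT, holes] using e2⟩
  | @tright _ a b _ ih =>
    obtain ⟨idx, hb, e1, e2⟩ := ih
    exact ⟨idx, hb, by simpa [denT, holes] using e1, by simpa [denT, holes] using e2⟩
  | tpair _ _ ih1 ih2 =>
    obtain ⟨idx₁, hb₁, e11, e12⟩ := ih1
    obtain ⟨idx₂, hb₂, e21, e22⟩ := ih2
    refine ⟨idx₁ ++ idx₂, ?_, ?_, ?_⟩
    · intro i hi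
      rcases List.mem_append.mp hi with h | h
      · exact hb₁ i h
      · exact hb₂ i h
    · simp [denT, holes, e11, e21]
    · simp [denT, holes, e12, e22]
  | @var n τ' h =>
    obtain ⟨hn, he⟩ := List.getElem?_eq_some_iff.mp h
    obtain ⟨h1, hty1⟩ := envTy_pt ht₁ hn
    obtain ⟨h2, hty2⟩ := envTy_pt ht₂ hn
    rw [he] at hty1 hty2
    have hl₁ := List.Forall₂.length_eq ht₁
    have hl₂ := List.Forall₂.length_eq ht₂
    set L₁ := List.zipWith (holes α) Δ δ₁ with hL₁
    set L₂ := List.zipWith (holes α) Δ δ₂ with hL₂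
    have hc₁ : L₁[n]? = some (holes α τ' δ₁[n]) := by
      rw [hL₁]
      simp [List.getElem?_zipWith, List.getElem?_eq_getElem hn,
        List.getElem?_eq_getElem h1, he]
    have hc₂ : L₂[n]? = some (holes α τ' δ₂[n]) := by
      rw [hL₂]
      simp [List.getElem?_zipWith, List.getElem?_eq_getElem hn,
        List.getElem?_eq_getElem h2, he]
    have hsh := envshell_pt hl₁ hl₂ hs hn
    rw [List.getD_eq_getElem δ₁ _ h1, List.getD_eq_getElem δ₂ _ h2] at hsh
    rw [he] at hsh
    have hclen : (holes α τ' δ₁[n]).length = (holes α τ' δ₂[n]).length :=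
      holes_len τ' hty1 hty2 hsh α
    have hoff : ((L₁.take n).map List.length).sum = ((L₂.take n).map List.length).sum := by
      rw [List.map_take, List.map_take, chunk_len ht₁ ht₂ hs α]
    set off := ((L₁.take n).map List.length).sum with hoffdef
    set len := (holes α τ' δ₁[n]).length with hlendef
    have key₁ : ∀ k, k < len →
        (envholes α Δ δ₁)[off + k]? = (holes α τ' δ₁[n])[k]? := by
      intro k hk
      exact flatten_chunk L₁ n _ hc₁ k hk
    have key₂ : ∀ k, k < len →
        (envholes α Δ δ₂)[off + k]? = (holes α τ' δ₂[n])[k]? := by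
      intro k hk
      rw [hoff]
      exact flatten_chunk L₂ n _ hc₂ k (by omega)
    refine ⟨(List.range len).map (fun k => off + k), ?_, ?_, ?_⟩
    · intro i hi
      simp only [List.mem_map, List.mem_range] at hi
      obtain ⟨k, hk, rfl⟩ := hi
      have b₁ : (envholes α Δ δ₁)[off + k]? = some ((holes α τ' δ₁[n])[k]) := by
        rw [key₁ k hk]; exact List.getElem?_eq_getElem hk
      have b₂ : (envholes α Δ δ₂)[off + k]? = some ((holes α τ' δ₂[n])[k]) := by
        rw [key₂ k hk]; exact List.getElem?_eq_getElem (by omega)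
      exact ⟨(List.getElem?_eq_some_iff.mp b₁).1, (List.getElem?_eq_some_iff.mp b₂).1⟩
    · have hd : denT (.var n) δ₁ = δ₁[n] := by
        show δ₁.getD n .sole = _; exact List.getD_eq_getElem δ₁ _ h1
      rw [hd]
      apply List.ext_getElem
      · simp [hlendef]
      · intro k k₁ k₂
        have hk : k < len := by simpa using k₁
        have b₁ : (envholes α Δ δ₁)[off + k]? = some ((holes α τ' δ₁[n])[k]) := by
          rw [key₁ k hk]; exact List.getElem?_eq_getElem hk
        simp only [List.getElem_map, List.getElem_range,
          List.getD_eq_getElem?_getD, b₁, Option.getD_some]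
    · have hd : denT (.var n) δ₂ = δ₂[n] := by
        show δ₂.getD n .sole = _; exact List.getD_eq_getElem δ₂ _ h2
      rw [hd]
      apply List.ext_getElem
      · simp only [List.length_map, List.length_range]; omega
      · intro k k₁ k₂
        have hk : k < len := by omega
        have b₂ : (envholes α Δ δ₂)[off + k]? = some ((holes α τ' δ₂[n])[k]) := by
          rw [key₂ k hk]; exact List.getElem?_eq_getElem (by omega)
        simp only [List.getElem_map, List.getElem_range,
          List.getD_eq_getElem?_getD, b₂, Option.getD_some]

lemma map_transfer_mp {l₁ l₂ : List Val}
    (hq : ∀ (i j : ℕ) (h₁ k₁ h₂ k₂ : Val), l₁[i]? = some h₁ → l₁[j]? = some k₁ →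
      l₂[i]? = some h₂ → l₂[j]? = some k₂ → (h₁ = k₁ ↔ h₂ = k₂))
    {idx₁ idx₂ : List ℕ}
    (hb₁ : ∀ i ∈ idx₁, i < l₁.length ∧ i < l₂.length)
    (hb₂ : ∀ i ∈ idx₂, i < l₁.length ∧ i < l₂.length)
    (h : idx₁.map (fun i => l₁.getD i .sole) = idx₂.map (fun i => l₁.getD i .sole)) :
    idx₁.map (fun i => l₂.getD i .sole) = idx₂.map (fun i => l₂.getD i .sole) := by
  have hlen : idx₁.length = idx₂.length := by
    have := congrArg List.length h; simpa using this
  apply List.ext_getElem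
  · simpa using hlen
  · intro k k₁ k₂
    have hk₁ : k < idx₁.length := by simpa using k₁
    have hk₂ : k < idx₂.length := by simpa using k₂
    obtain ⟨bi₁, bi₂⟩ := hb₁ _ (List.getElem_mem hk₁)
    obtain ⟨bj₁, bj₂⟩ := hb₂ _ (List.getElem_mem hk₂)
    have he : l₁.getD idx₁[k] .sole = l₁.getD idx₂[k] .sole := by
      have h' := congrArg (fun l => l[k]?) h
      simp only [List.getElem?_map, List.getElem?_eq_getElem hk₁,
        List.getElem?_eq_getElem hk₂, Option.map_some] at h'
      exact Option.some.inj h'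
    have gi₁ : l₁[idx₁[k]]? = some (l₁.getD idx₁[k] .sole) := by
      rw [List.getD_eq_getElem _ _ bi₁]; exact List.getElem?_eq_getElem bi₁
    have gj₁ : l₁[idx₂[k]]? = some (l₁.getD idx₂[k] .sole) := by
      rw [List.getD_eq_getElem _ _ bj₁]; exact List.getElem?_eq_getElem bj₁
    have gi₂ : l₂[idx₁[k]]? = some (l₂.getD idx₁[k] .sole) := by
      rw [List.getD_eq_getElem _ _ bi₂]; exact List.getElem?_eq_getElem bi₂
    have gj₂ : l₂[idx₂[k]]? = some (l₂.getD idx₂[k] .sole) := by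
      rw [List.getD_eq_getElem _ _ bj₂]; exact List.getElem?_eq_getElem bj₂
    simp only [List.getElem_map]
    exact (hq _ _ _ _ _ _ gi₁ gj₁ gi₂ gj₂).mp he

lemma map_transfer {l₁ l₂ : List Val}
    (hq : ∀ (i j : ℕ) (h₁ k₁ h₂ k₂ : Val), l₁[i]? = some h₁ → l₁[j]? = some k₁ →
      l₂[i]? = some h₂ → l₂[j]? = some k₂ → (h₁ = k₁ ↔ h₂ = k₂))
    {idx₁ idx₂ : List ℕ}
    (hb₁ : ∀ i ∈ idx₁, i < l₁.length ∧ i < l₂.length)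
    (hb₂ : ∀ i ∈ idx₂, i < l₁.length ∧ i < l₂.length) :
    (idx₁.map (fun i => l₁.getD i .sole) = idx₂.map (fun i => l₁.getD i .sole)) ↔
    (idx₁.map (fun i => l₂.getD i .sole) = idx₂.map (fun i => l₂.getD i .sole)) := by
  constructor
  · exact map_transfer_mp hq hb₁ hb₂
  · exact map_transfer_mp (fun i j h₁ k₁ h₂ k₂ a b c d => (hq i j h₂ k₂ h₁ k₁ c d a b).symm)
      (fun i hi => (hb₁ i hi).symm) (fun i hi => (hb₂ i hi).symm)

/-- Equality patterns preserve value equality: under equality-pattern-equivalent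
environments, denotations of two terms of a common type agree on equality. -/
theorem stmt_8 (σ₁ σ₂ : ℕ → PTy) (Δ : List PTy) (δ₁ δ₂ : List Val)
    (ht₁ : EnvTy σ₁ Δ δ₁) (ht₂ : EnvTy σ₂ Δ δ₂)
    (hp : EqPat Δ δ₁ δ₂)
    (τ : PTy) (v₁ v₂ : Term) (hv₁ : TmTy Δ v₁ τ) (hv₂ : TmTy Δ v₂ τ) :
    denT v₁ δ₁ = denT v₂ δ₁ ↔ denT v₁ δ₂ = denT v₂ δ₂ := by
  obtain ⟨hs, hq⟩ := hp
  have hl₁ := List.Forall₂.length_eq ht₁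
  have hl₂ := List.Forall₂.length_eq ht₂
  rw [eq_iff_shell_holes τ (denT_ty ht₁ hv₁) (denT_ty ht₁ hv₂),
      eq_iff_shell_holes τ (denT_ty ht₂ hv₁) (denT_ty ht₂ hv₂)]
  apply and_congr
  · rw [shell_denT hl₁ hl₂ hs hv₁, shell_denT hl₁ hl₂ hs hv₂]
  · apply forall_congr'
    intro α
    obtain ⟨idx₁, hb₁, e₁₁, e₁₂⟩ := holes_idx ht₁ ht₂ hs hv₁ α
    obtain ⟨idx₂, hb₂, e₂₁, e₂₂⟩ := holes_idx ht₁ ht₂ hs hv₂ α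
    rw [e₁₁, e₂₁, e₁₂, e₂₂]
    exact map_transfer (hq α) hb₁ hb₂
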